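/- In max-times algebra, for an n×n nonnegative matrix B with Tr(B) ≤ 1, every vector of the form x = B* ⊗ u with u a nonzero nonnegative vector satisfies B ⊗ x ≤ x; conversely, every positive vector x with B ⊗ x ≤ x can be written as x = B* ⊗ u for some nonzero u (for example u = x). -/

import Mathlib

/-- Maximum of a function over `Fin n` (nonempty since `0 < n`). -/
noncomputable def vmax {n : ℕ} (hn : 0 < n) (f : Fin n → ℝ) : ℝ :=
  Finset.univ.sup' (Finset.univ_nonempty_iff.mpr ⟨⟨0, hn⟩⟩) f

/-- Minimum of a function over `Fin n`. -/
noncomputable def vmin {n : ℕ} (hn : 0 < n) (f : Fin n → ℝ) : ℝ :=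
  Finset.univ.inf' (Finset.univ_nonempty_iff.mpr ⟨⟨0, hn⟩⟩) f

/-- Max-times matrix product. -/
noncomputable def mtProd {n : ℕ} (hn : 0 < n) (X Y : Matrix (Fin n) (Fin n) ℝ) :
    Matrix (Fin n) (Fin n) ℝ :=
  fun i j => vmax hn (fun k => X i k * Y k j)

/-- Max-times matrix powers, `B^0 = I`. -/
noncomputable def mtPow {n : ℕ} (hn : 0 < n) (B : Matrix (Fin n) (Fin n) ℝ) :
    ℕ → Matrix (Fin n) (Fin n) ℝ
  | 0 => fun i j => if i = j then (1 : ℝ) else 0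
  | (k + 1) => mtProd hn B (mtPow hn B k)

/-- Kleene star: entrywise maximum of `B^0, ..., B^(n-1)`. -/
noncomputable def kstar {n : ℕ} (hn : 0 < n) (B : Matrix (Fin n) (Fin n) ℝ) :
    Matrix (Fin n) (Fin n) ℝ :=
  fun i j => vmax hn (fun k : Fin n => mtPow hn B k.1 i j)

/-- Max-times matrix-vector product. -/
noncomputable def mtVec {n : ℕ} (hn : 0 < n) (X : Matrix (Fin n) (Fin n) ℝ)
    (x : Fin n → ℝ) : Fin n → ℝ :=
  fun i => vmax hn (fun j => X i j * x j)

lemma le_vmax {n : ℕ} (hn : 0 < n) (f : Fin n → ℝ) (j : Fin n) : f j ≤ vmax hn f :=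
  Finset.le_sup' f (Finset.mem_univ j)

lemma vmax_le {n : ℕ} (hn : 0 < n) (f : Fin n → ℝ) {c : ℝ} (h : ∀ j, f j ≤ c) :
    vmax hn f ≤ c :=
  Finset.sup'_le _ _ (fun j _ => h j)

lemma vmax_attained {n : ℕ} (hn : 0 < n) (f : Fin n → ℝ) : ∃ j, vmax hn f = f j := by
  obtain ⟨j, _, hj⟩ := Finset.exists_mem_eq_sup' (Finset.univ_nonempty_iff.mpr ⟨⟨0, hn⟩⟩) f
  exact ⟨j, hj⟩

lemma mtPow_succ {n : ℕ} (hn : 0 < n) (B : Matrix (Fin n) (Fin n) ℝ) (m : ℕ) (i j : Fin n) :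
    mtPow hn B (m + 1) i j = vmax hn (fun l => B i l * mtPow hn B m l j) := rfl

lemma mtPow_nonneg {n : ℕ} (hn : 0 < n) (B : Matrix (Fin n) (Fin n) ℝ)
    (hB : ∀ i j, 0 ≤ B i j) : ∀ m i j, 0 ≤ mtPow hn B m i j := by
  intro m
  induction m with
  | zero => intro i j; simp only [mtPow]; split <;> norm_num
  | succ m ih =>
    intro i j
    refine le_trans ?_ (le_vmax hn _ ⟨0, hn⟩)
    exact mul_nonneg (hB _ _) (ih _ _)

section Path

variable {n : ℕ} (hn : 0 < n) (B : Matrix (Fin n) (Fin n) ℝ) (hB : ∀ i j, 0 ≤ B i j)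
include hB

lemma weight_le_pow (m : ℕ) : ∀ p : ℕ → Fin n,
    ∏ t ∈ Finset.range m, B (p t) (p (t + 1)) ≤ mtPow hn B m (p 0) (p m) := by
  induction m with
  | zero => intro p; simp [mtPow]
  | succ m ih =>
    intro p
    rw [Finset.prod_range_succ']
    have h1 := ih (fun t => p (t + 1))
    calc (∏ t ∈ Finset.range m, B (p (t + 1)) (p (t + 1 + 1))) * B (p 0) (p 1)
        ≤ mtPow hn B m (p 1) (p (m + 1)) * B (p 0) (p 1) := by
          exact mul_le_mul_of_nonneg_right h1 (hB _ _)
      _ = B (p 0) (p 1) * mtPow hn B m (p 1) (p (m + 1)) := mul_comm _ _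
      _ ≤ mtPow hn B (m + 1) (p 0) (p (m + 1)) := by
          rw [mtPow_succ]
          exact le_vmax hn (fun l => B (p 0) l * mtPow hn B m l (p (m + 1))) (p 1)

lemma pow_path (m : ℕ) : ∀ i j : Fin n, mtPow hn B m i j = 0 ∨
    ∃ p : ℕ → Fin n, p 0 = i ∧ p m = j ∧
      mtPow hn B m i j ≤ ∏ t ∈ Finset.range m, B (p t) (p (t + 1)) := by
  induction m with
  | zero =>
    intro i j
    by_cases h : i = j
    · subst h
      exact Or.inr ⟨fun _ => i, rfl, rfl, by simp [mtPow]⟩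
    · exact Or.inl (by simp [mtPow, h])
  | succ m ih =>
    intro i j
    obtain ⟨k, hk⟩ := vmax_attained hn (fun l => B i l * mtPow hn B m l j)
    rw [mtPow_succ hn B m i j, hk]
    rcases ih k j with h0 | ⟨p, hp0, hpm, hple⟩
    · exact Or.inl (by rw [h0, mul_zero])
    · refine Or.inr ⟨fun t => if t = 0 then i else p (t - 1), by simp, by simp [hpm], ?_⟩
      rw [Finset.prod_range_succ']
      simp only [Nat.add_sub_cancel]
      have he : ∀ t ∈ Finset.range m,
          B (if t + 1 = 0 then i else p t) (if t + 1 + 1 = 0 then i else p (t + 1))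
            = B (p t) (p (t + 1)) := by intro t _; simp
      rw [Finset.prod_congr rfl he]
      simp only [if_pos rfl, if_neg (Nat.one_ne_zero), Nat.sub_self]
      calc B i k * mtPow hn B m k j ≤ B i k * ∏ t ∈ Finset.range m, B (p t) (p (t + 1)) :=
            mul_le_mul_of_nonneg_left (hple) (hB _ _)
        _ = (∏ t ∈ Finset.range m, B (p t) (p (t + 1))) * B i (p 0) := by rw [hp0, mul_comm]

lemma pow_n_le_kstar (hTr : ∀ k, 1 ≤ k → k ≤ n → ∀ i, mtPow hn B k i i ≤ 1) (i j : Fin n) :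
    mtPow hn B n i j ≤ kstar hn B i j := by
  have hks0 : 0 ≤ kstar hn B i j :=
    le_trans (mtPow_nonneg hn B hB 0 i j) (le_vmax hn (fun k : Fin n => mtPow hn B k.1 i j) ⟨0, hn⟩)
  rcases pow_path hn B hB n i j with h0 | ⟨p, hp0, hpn, hple⟩
  · rw [h0]; exact hks0
  -- pigeonhole
  have hcard : Fintype.card (Fin n) < Fintype.card (Fin (n + 1)) := by simp
  obtain ⟨a', b', hne, heq⟩ := Fintype.exists_ne_map_eq_of_card_lt
    (fun t : Fin (n + 1) => p t.1) hcard
  -- wlog a < b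
  obtain ⟨a, b, hab, hbn, hpab⟩ : ∃ a b : ℕ, a < b ∧ b ≤ n ∧ p a = p b := by
    rcases lt_or_gt_of_ne (fun h => hne (Fin.ext h) : (a' : ℕ) ≠ (b' : ℕ)) with h | h
    · exact ⟨a', b', h, Nat.lt_succ_iff.mp b'.2, heq⟩
    · exact ⟨b', a', h, Nat.lt_succ_iff.mp a'.2, heq.symm⟩
  set c := b - a with hc
  have hc1 : 1 ≤ c := by omega
  have hcn : c ≤ n := by omega
  set m' := n - c with hm'
  have ham' : a ≤ m' := by omega
  have hm'n : m' < n := by omega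
  set f : ℕ → ℝ := fun t => B (p t) (p (t + 1)) with hf
  -- cycle weight ≤ 1
  have hcyc : ∏ t ∈ Finset.Ico a b, f t ≤ 1 := by
    rw [Finset.prod_Ico_eq_prod_range]
    have := weight_le_pow hn B hB (b - a) (fun t => p (a + t))
    have heq2 : ∀ t ∈ Finset.range (b - a), f (a + t) = B (p (a + t)) (p (a + t + 1)) := by
      intro t _; rfl
    calc ∏ t ∈ Finset.range (b - a), f (a + t)
        = ∏ t ∈ Finset.range (b - a), B (p (a + t)) (p (a + (t + 1))) := by
          apply Finset.prod_congr rfl; intro t _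
          show B (p (a + t)) (p (a + t + 1)) = _
          have : a + t + 1 = a + (t + 1) := by omega
          rw [this]
      _ ≤ mtPow hn B (b - a) (p (a + 0)) (p (a + (b - a))) := weight_le_pow hn B hB _ _
      _ ≤ 1 := by
          have h1 : a + 0 = a := by omega
          have h2 : a + (b - a) = b := by omega
          rw [h1, h2, ← hpab]
          exact hTr (b - a) hc1 (by omega) (p a)
  -- spliced path
  set q : ℕ → Fin n := fun t => if t < a then p t else p (t + c) with hq
  have hq0 : q 0 = i := by
    by_cases h : 0 < a
    · simp only [hq, if_pos h]; exact hp0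
    · have ha0 : a = 0 := by omega
      simp only [hq, if_neg (by omega : ¬ 0 < a)]
      have : (0 : ℕ) + c = b := by omega
      rw [this, ← hpab, ha0, hp0]
  have hqm' : q m' = j := by
    simp only [hq, if_neg (by omega : ¬ m' < a)]
    have : m' + c = n := by omega
    rw [this, hpn]
  have hqlt : ∀ t, t ≤ a → q t = p t := by
    intro t ht
    rcases lt_or_eq_of_le ht with h | h
    · simp [hq, h]
    · rw [h]
      simp only [hq, if_neg (lt_irrefl a)]
      have : a + c = b := by omega
      rw [this, ← hpab]
  have hqge : ∀ t, a ≤ t → q t = p (t + c) := by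
    intro t ht
    rcases lt_or_eq_of_le ht with h | h
    · simp [hq, not_lt.mpr (le_of_lt h)]
    · rw [← h]; simp only [hq, if_neg (lt_irrefl a)]
  -- weight of spliced path equals product over [0,a) ∪ [b,n)
  have hsplit : ∏ t ∈ Finset.range m', B (q t) (q (t + 1))
      = (∏ t ∈ Finset.Ico 0 a, f t) * (∏ t ∈ Finset.Ico b n, f t) := by
    rw [Finset.range_eq_Ico, ← Finset.prod_Ico_consecutive _ (Nat.zero_le a) ham']
    congr 1
    · apply Finset.prod_congr rfl
      intro t ht
      simp only [Finset.mem_Ico] at ht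
      rw [hqlt t (le_of_lt ht.2), hqlt (t + 1) (by omega), hf]
    · rw [Finset.prod_Ico_eq_prod_range, Finset.prod_Ico_eq_prod_range]
      have hlen : m' - a = n - b := by omega
      rw [hlen]
      apply Finset.prod_congr rfl
      intro t _
      rw [hqge (a + t) (by omega), hqge (a + t + 1) (by omega), hf]
      have h1 : a + t + c = b + t := by omega
      have h2 : a + t + 1 + c = b + t + 1 := by omega
      rw [h1, h2]
  -- combine
  have hw : ∏ t ∈ Finset.range n, f t ≤ ∏ t ∈ Finset.range m', B (q t) (q (t + 1)) := by
    rw [hsplit, Finset.range_eq_Ico,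
      ← Finset.prod_Ico_consecutive f (Nat.zero_le b) hbn,
      ← Finset.prod_Ico_consecutive f (Nat.zero_le a) (le_of_lt hab)]
    have hA : 0 ≤ ∏ t ∈ Finset.Ico 0 a, f t := Finset.prod_nonneg (fun t _ => hB _ _)
    have hC : 0 ≤ ∏ t ∈ Finset.Ico b n, f t := Finset.prod_nonneg (fun t _ => hB _ _)
    have := mul_le_mul_of_nonneg_right (mul_le_mul_of_nonneg_left hcyc hA) hC
    simpa using this
  calc mtPow hn B n i j ≤ ∏ t ∈ Finset.range n, f t := hple
    _ ≤ ∏ t ∈ Finset.range m', B (q t) (q (t + 1)) := hw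
    _ ≤ mtPow hn B m' (q 0) (q m') := weight_le_pow hn B hB m' q
    _ = mtPow hn B m' i j := by rw [hq0, hqm']
    _ ≤ kstar hn B i j := le_vmax hn (fun k : Fin n => mtPow hn B k.1 i j) ⟨m', hm'n⟩

lemma mtPow_le_kstar (hTr : ∀ k, 1 ≤ k → k ≤ n → ∀ i, mtPow hn B k i i ≤ 1)
    (k : ℕ) (hk : k ≤ n) (i j : Fin n) : mtPow hn B k i j ≤ kstar hn B i j := by
  rcases lt_or_eq_of_le hk with h | h
  · exact le_vmax hn (fun l : Fin n => mtPow hn B l.1 i j) ⟨k, h⟩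
  · rw [h]; exact pow_n_le_kstar hn B hB hTr i j

lemma pow_vec_le {x : Fin n → ℝ} (hx : ∀ i, 0 < x i)
    (hle : ∀ i, mtVec hn B x i ≤ x i) :
    ∀ m i j, mtPow hn B m i j * x j ≤ x i := by
  intro m
  induction m with
  | zero =>
    intro i j
    simp only [mtPow]
    split
    · rename_i h; rw [h, one_mul]
    · rw [zero_mul]; exact le_of_lt (hx i)
  | succ m ih =>
    intro i j
    rw [mtPow_succ]
    obtain ⟨l, hl⟩ := vmax_attained hn (fun l => B i l * mtPow hn B m l j)
    rw [hl]
    calc B i l * mtPow hn B m l j * x j = B i l * (mtPow hn B m l j * x j) := mul_assoc _ _ _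
      _ ≤ B i l * x l := mul_le_mul_of_nonneg_left (ih l j) (hB i l)
      _ ≤ mtVec hn B x i := le_vmax hn (fun l => B i l * x l) l
      _ ≤ x i := hle i

end Path

theorem maxTimes_Bxlex_solutions {n : ℕ} (hn : 0 < n)
    (B : Matrix (Fin n) (Fin n) ℝ)
    (hB : ∀ i j, 0 ≤ B i j)
    (hTr : ∀ k, 1 ≤ k → k ≤ n → ∀ i, mtPow hn B k i i ≤ 1) :
    (∀ u : Fin n → ℝ, (∀ j, 0 ≤ u j) → (∃ j, 0 < u j) →
      ∀ i, mtVec hn B (mtVec hn (kstar hn B) u) i ≤ mtVec hn (kstar hn B) u i) ∧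
    (∀ x : Fin n → ℝ, (∀ i, 0 < x i) → (∀ i, mtVec hn B x i ≤ x i) →
      ∃ u : Fin n → ℝ, (∀ j, 0 ≤ u j) ∧ (∃ j, 0 < u j) ∧
        ∀ i, x i = mtVec hn (kstar hn B) u i) := by
  constructor
  · intro u hu _ i
    apply vmax_le
    intro j
    obtain ⟨l, hl⟩ := vmax_attained hn (fun l => kstar hn B j l * u l)
    show B i j * mtVec hn (kstar hn B) u j ≤ _
    rw [show mtVec hn (kstar hn B) u j = kstar hn B j l * u l from hl]
    obtain ⟨k, hk⟩ := vmax_attained hn (fun k : Fin n => mtPow hn B k.1 j l)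
    have h1 : B i j * kstar hn B j l ≤ mtPow hn B (k.1 + 1) i l := by
      rw [show kstar hn B j l = mtPow hn B k.1 j l from hk, mtPow_succ]
      exact le_vmax hn (fun m => B i m * mtPow hn B k.1 m l) j
    have h2 : mtPow hn B (k.1 + 1) i l ≤ kstar hn B i l :=
      mtPow_le_kstar hn B hB hTr (k.1 + 1) k.2 i l
    calc B i j * (kstar hn B j l * u l) = B i j * kstar hn B j l * u l := (mul_assoc _ _ _).symm
      _ ≤ kstar hn B i l * u l :=
        mul_le_mul_of_nonneg_right (le_trans h1 h2) (hu l)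
      _ ≤ mtVec hn (kstar hn B) u i := le_vmax hn (fun l => kstar hn B i l * u l) l
  · intro x hx hle
    refine ⟨x, fun j => le_of_lt (hx j), ⟨⟨0, hn⟩, hx _⟩, fun i => le_antisymm ?_ ?_⟩
    · -- x i ≤ mtVec kstar x i
      have h1 : (1 : ℝ) ≤ kstar hn B i i := by
        have := le_vmax hn (fun k : Fin n => mtPow hn B k.1 i i) ⟨0, hn⟩
        simpa [mtPow, kstar] using this
      calc x i = 1 * x i := (one_mul _).symm
        _ ≤ kstar hn B i i * x i := mul_le_mul_of_nonneg_right h1 (le_of_lt (hx i))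
        _ ≤ mtVec hn (kstar hn B) x i := le_vmax hn (fun l => kstar hn B i l * x l) i
    · apply vmax_le
      intro j
      show kstar hn B i j * x j ≤ x i
      obtain ⟨k, hk⟩ := vmax_attained hn (fun k : Fin n => mtPow hn B k.1 i j)
      rw [show kstar hn B i j = mtPow hn B k.1 i j from hk]
      exact pow_vec_le hn B hB hx hle k.1 i j
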